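/- Let a, b, c, d, f, r, s be seven pairwise distinct colors. Let G be the simple graph with vertex set {p₀, q₀, z, q₁, p₁, u₁} and edge set {p₀q₀, q₀z, zq₁, q₁p₁, p₁u₁, u₁p₀, q₀u₁, zu₁, q₁u₁}, and let L be the list-assignment L(p₀) = {a}, L(q₀) = {a, b, c, r, s}, L(z) = {b, c, d, r, s}, L(q₁) = {b, c, d, f, s}, L(p₁) = {b, c, f}, L(u₁) = {a, b, c}. Then there is no partial L-coloring φ of {p₀, u₁, z, p₁} with p₀, z, p₁ ∈ dom(φ) such that both |L(q₀) \ {φ(w) : w ∈ N(q₀) ∩ dom(φ)}| ≥ 3 and |L(q₁) \ {φ(w) : w ∈ N(q₁) ∩ dom(φ)}| ≥ 3, and such that every extension of φ to an L-coloring of dom(φ) ∪ {q₀, q₁} extends to an L-coloring of all of G. (That is, Crown_L(P, G) = ∅ for the 4-edge path P = p₀q₀zq₁p₁, showing that the hypothesis of Theorem 1.2 that q₀ and q₁ have no common neighbor outside P cannot be dropped.) -/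
import Mathlib


/-- The edge list of the counterexample graph of Figure 6: vertices `0 = p₀`, `1 = q₀`,
`2 = z`, `3 = q₁`, `4 = p₁`, `5 = u₁`; edges `p₀q₀, q₀z, zq₁, q₁p₁, p₁u₁, u₁p₀, q₀u₁,
zu₁, q₁u₁`. -/
def figEdges : List (Fin 6 × Fin 6) :=
  [(0, 1), (1, 2), (2, 3), (3, 4), (4, 5), (5, 0), (1, 5), (2, 5), (3, 5)]

/-- Adjacency in the counterexample graph (symmetrized). -/
def figAdj (v w : Fin 6) : Prop := (v, w) ∈ figEdges ∨ (w, v) ∈ figEdges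

lemma ncard_sdiff3 {F : Finset ℕ} {p q t : ℕ} (hp : p ∈ F) (hq : q ∈ F) (ht : t ∈ F)
    (hpq : p ≠ q) (hpt : p ≠ t) (hqt : q ≠ t) (hF : F.card = 5) {S : Set ℕ}
    (hS : ∀ x ∈ S, x ∈ F ∧ x ≠ p ∧ x ≠ q ∧ x ≠ t) : ¬ 3 ≤ S.ncard := by
  intro h3
  have hsub : S ⊆ ↑(F \ {p, q, t}) := fun x hx => by
    obtain ⟨h1, h2, h3, h4⟩ := hS x hx
    simp [h1, h2, h3, h4]
  have hcard : (F \ ({p, q, t} : Finset ℕ)).card = 2 := by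
    rw [Finset.card_sdiff_of_subset (by intro x hx; simp at hx; rcases hx with rfl | rfl | rfl <;> assumption)]
    have h3c : ({p, q, t} : Finset ℕ).card = 3 := by
      rw [Finset.card_insert_of_notMem (by simp [hpq, hpt]),
        Finset.card_insert_of_notMem (by simp [hqt]), Finset.card_singleton]
    omega
  have := Set.ncard_le_ncard hsub (Set.toFinite _)
  rw [Set.ncard_coe_finset, hcard] at this
  omega



lemma caseB (a b c : ℕ) (L : Fin 6 → Finset ℕ) (hL5 : L 5 = {a, b, c})
    (φ : Fin 6 → Option ℕ) (x2 x4 v1 v3 : ℕ)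
    (hφ0 : φ 0 = some a) (hφ2 : φ 2 = some x2) (hφ4 : φ 4 = some x4)
    (hφ1 : φ 1 = none) (hφ3 : φ 3 = none) (hφ5 : φ 5 = none)
    (hv1L : v1 ∈ L 1) (hv3L : v3 ∈ L 3)
    (hv1a : v1 ≠ a) (hv12 : v1 ≠ x2) (hv32 : v3 ≠ x2) (hv34 : v3 ≠ x4)
    (hcovb : b = v1 ∨ b = x2 ∨ b = v3 ∨ b = x4)
    (hcovc : c = v1 ∨ c = x2 ∨ c = v3 ∨ c = x4)
    (hext : ∀ ψ : Fin 6 → ℕ,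
        (∀ v x, φ v = some x → ψ v = x) →
        ψ 1 ∈ L 1 → ψ 3 ∈ L 3 →
        (∀ v w, figAdj v w → ((φ v).isSome ∨ v = 1 ∨ v = 3) →
          ((φ w).isSome ∨ w = 1 ∨ w = 3) → ψ v ≠ ψ w) →
        ∃ χ : Fin 6 → ℕ, (∀ v, χ v ∈ L v) ∧ (∀ v w, figAdj v w → χ v ≠ χ w) ∧
          ∀ v, ((φ v).isSome ∨ v = 1 ∨ v = 3) → χ v = ψ v) : False := by
  have hne5 : ∀ u : Fin 6, ((φ u).isSome ∨ u = 1 ∨ u = 3) → u ≠ 5 := by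
    rintro u hu rfl
    rcases hu with h | h | h
    · rw [hφ5] at h; simp at h
    · exact absurd h (by decide)
    · exact absurd h (by decide)
  obtain ⟨χ, hχL, hχadj, hχeq⟩ := hext ![a, v1, x2, v3, x4, 0]
    (by
      intro v x hvx
      fin_cases v
      · show a = x
        replace hvx : φ 0 = some x := hvx
        rw [hφ0] at hvx; exact Option.some.inj hvx
      · replace hvx : φ 1 = some x := hvx
        rw [hφ1] at hvx; cases hvx
      · show x2 = x
        replace hvx : φ 2 = some x := hvx
        rw [hφ2] at hvx; exact Option.some.inj hvx
      · replace hvx : φ 3 = some x := hvx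
        rw [hφ3] at hvx; cases hvx
      · show x4 = x
        replace hvx : φ 4 = some x := hvx
        rw [hφ4] at hvx; exact Option.some.inj hvx
      · replace hvx : φ 5 = some x := hvx
        rw [hφ5] at hvx; cases hvx)
    (by exact hv1L) (by exact hv3L)
    (by
      intro v w hadj hv hw
      have hv5 := hne5 v hv
      have hw5 := hne5 w hw
      fin_cases v <;> fin_cases w <;>
        first
          | (exact absurd hadj (by unfold figAdj figEdges; decide))
          | (exact absurd rfl hv5)
          | (exact absurd rfl hw5)
          | (exact fun h => hv1a h.symm)
          | (exact hv1a)
          | (exact hv12)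
          | (exact fun h => hv12 h.symm)
          | (exact fun h => hv32 h.symm)
          | (exact hv32)
          | (exact hv34)
          | (exact fun h => hv34 h.symm))
  have adj50 : figAdj 5 0 := by unfold figAdj figEdges; decide
  have adj15 : figAdj 1 5 := by unfold figAdj figEdges; decide
  have adj25 : figAdj 2 5 := by unfold figAdj figEdges; decide
  have adj35 : figAdj 3 5 := by unfold figAdj figEdges; decide
  have adj45 : figAdj 4 5 := by unfold figAdj figEdges; decide
  have e0 : χ 0 = a := hχeq 0 (Or.inl (by rw [hφ0]; rfl))
  have e1 : χ 1 = v1 := hχeq 1 (Or.inr (Or.inl rfl))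
  have e2 : χ 2 = x2 := hχeq 2 (Or.inl (by rw [hφ2]; rfl))
  have e3 : χ 3 = v3 := hχeq 3 (Or.inr (Or.inr rfl))
  have e4 : χ 4 = x4 := hχeq 4 (Or.inl (by rw [hφ4]; rfl))
  have h5L := hχL 5
  rw [hL5] at h5L
  simp only [Finset.mem_insert, Finset.mem_singleton] at h5L
  rcases h5L with h | h | h
  · exact hχadj 5 0 adj50 (h.trans e0.symm)
  · rcases hcovb with hb | hb | hb | hb
    · exact hχadj 1 5 adj15 ((e1.trans hb.symm).trans h.symm)
    · exact hχadj 2 5 adj25 ((e2.trans hb.symm).trans h.symm)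
    · exact hχadj 3 5 adj35 ((e3.trans hb.symm).trans h.symm)
    · exact hχadj 4 5 adj45 ((e4.trans hb.symm).trans h.symm)
  · rcases hcovc with hc | hc | hc | hc
    · exact hχadj 1 5 adj15 ((e1.trans hc.symm).trans h.symm)
    · exact hχadj 2 5 adj25 ((e2.trans hc.symm).trans h.symm)
    · exact hχadj 3 5 adj35 ((e3.trans hc.symm).trans h.symm)
    · exact hχadj 4 5 adj45 ((e4.trans hc.symm).trans h.symm)

/-- Figure 6: with seven pairwise distinct colors `a, b, c, d, f, r, s` and the lists
`L(p₀) = {a}`, `L(q₀) = {a,b,c,r,s}`, `L(z) = {b,c,d,r,s}`, `L(q₁) = {b,c,d,f,s}`,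
`L(p₁) = {b,c,f}`, `L(u₁) = {a,b,c}`, there is no partial `L`-coloring `φ` of
`{p₀, u₁, z, p₁}` with `p₀, z, p₁ ∈ dom(φ)` such that each of `q₀, q₁` retains at least
three available colors after deleting the colors `φ` uses on its neighbors, and such
that every extension of `φ` to an `L`-coloring of `dom(φ) ∪ {q₀, q₁}` extends to an
`L`-coloring of the whole graph.  (Partial colorings are encoded as
`φ : Fin 6 → Option ℕ`, with `φ v = some x` meaning `v ∈ dom(φ)` is colored `x`.) -/
theorem no_crown_for_figure_six (a b c d f r s : ℕ)
    (hdist : [a, b, c, d, f, r, s].Pairwise (· ≠ ·))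
    (L : Fin 6 → Finset ℕ)
    (hL0 : L 0 = {a}) (hL1 : L 1 = {a, b, c, r, s}) (hL2 : L 2 = {b, c, d, r, s})
    (hL3 : L 3 = {b, c, d, f, s}) (hL4 : L 4 = {b, c, f}) (hL5 : L 5 = {a, b, c}) :
    ¬ ∃ φ : Fin 6 → Option ℕ,
      (∀ v : Fin 6, (φ v).isSome → v ∈ ({0, 5, 2, 4} : Set (Fin 6))) ∧
      (φ 0).isSome ∧ (φ 2).isSome ∧ (φ 4).isSome ∧
      (∀ v x, φ v = some x → x ∈ L v) ∧
      (∀ v w x y, figAdj v w → φ v = some x → φ w = some y → x ≠ y) ∧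
      3 ≤ {x | x ∈ L 1 ∧ ∀ w, figAdj 1 w → φ w ≠ some x}.ncard ∧
      3 ≤ {x | x ∈ L 3 ∧ ∀ w, figAdj 3 w → φ w ≠ some x}.ncard ∧
      (∀ ψ : Fin 6 → ℕ,
        (∀ v x, φ v = some x → ψ v = x) →
        ψ 1 ∈ L 1 → ψ 3 ∈ L 3 →
        (∀ v w, figAdj v w → ((φ v).isSome ∨ v = 1 ∨ v = 3) →
          ((φ w).isSome ∨ w = 1 ∨ w = 3) → ψ v ≠ ψ w) →
        ∃ χ : Fin 6 → ℕ, (∀ v, χ v ∈ L v) ∧ (∀ v w, figAdj v w → χ v ≠ χ w) ∧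
          ∀ v, ((φ v).isSome ∨ v = 1 ∨ v = 3) → χ v = ψ v) := by
  simp only [List.pairwise_cons, List.mem_cons, List.not_mem_nil, List.mem_singleton,
    forall_eq_or_imp, forall_eq, List.Pairwise.nil, and_true, false_implies, imp_false,
    forall_const, implies_true] at hdist
  obtain ⟨⟨hab, hac, had, haf, har, has⟩, ⟨hbc, hbd, hbf, hbr, hbs⟩,
    ⟨hcd, hcf, hcr, hcs⟩, ⟨hdf, hdr, hds⟩, ⟨hfr, hfs⟩, hrs⟩ := hdist
  rintro ⟨φ, hdom, h0s, h2s, h4s, hmem, hadjφ, hn1, hn3, hext⟩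
  have hφ1 : φ 1 = none := by
    cases h : φ 1 with
    | none => rfl
    | some x =>
      have h1 := hdom 1 (by rw [h]; rfl)
      simp only [Set.mem_insert_iff, Set.mem_singleton_iff] at h1
      rcases h1 with h1 | h1 | h1 | h1 <;> exact absurd h1 (by decide)
  have hφ3 : φ 3 = none := by
    cases h : φ 3 with
    | none => rfl
    | some x =>
      have h1 := hdom 3 (by rw [h]; rfl)
      simp only [Set.mem_insert_iff, Set.mem_singleton_iff] at h1
      rcases h1 with h1 | h1 | h1 | h1 <;> exact absurd h1 (by decide)
  obtain ⟨x0, hφ0⟩ := Option.isSome_iff_exists.mp h0s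
  have hx0 : x0 = a := by have := hmem 0 x0 hφ0; rw [hL0] at this; simpa using this
  rw [hx0] at hφ0
  obtain ⟨x2, hφ2⟩ := Option.isSome_iff_exists.mp h2s
  have hx2L : x2 = b ∨ x2 = c ∨ x2 = d ∨ x2 = r ∨ x2 = s := by
    have := hmem 2 x2 hφ2; rw [hL2] at this; simpa using this
  obtain ⟨x4, hφ4⟩ := Option.isSome_iff_exists.mp h4s
  have hx4L : x4 = b ∨ x4 = c ∨ x4 = f := by
    have := hmem 4 x4 hφ4; rw [hL4] at this; simpa using this
  cases hφ5 : φ 5 with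
  | some x5 =>
    have hx5a : x5 ≠ a := hadjφ 5 0 x5 a (by unfold figAdj figEdges; decide) hφ5 hφ0
    have hx5bc : x5 = b ∨ x5 = c := by
      have := hmem 5 x5 hφ5; rw [hL5] at this; simp at this
      rcases this with h | h | h
      · exact absurd h hx5a
      · exact Or.inl h
      · exact Or.inr h
    have h25 : x2 ≠ x5 := hadjφ 2 5 x2 x5 (by unfold figAdj figEdges; decide) hφ2 hφ5
    have h45 : x4 ≠ x5 := hadjφ 4 5 x4 x5 (by unfold figAdj figEdges; decide) hφ4 hφ5
    by_cases hx2d : x2 = d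
    · rw [hx2d] at hφ2 h25
      refine ncard_sdiff3 (F := L 3) (p := d) (q := x4) (t := x5) ?_ ?_ ?_ ?_ ?_ h45 ?_ ?_ hn3
      · rw [hL3]; simp
      · rcases hx4L with rfl | rfl | rfl <;> (rw [hL3]; simp)
      · rcases hx5bc with rfl | rfl <;> (rw [hL3]; simp)
      · rcases hx4L with rfl | rfl | rfl
        · exact fun h => hbd h.symm
        · exact fun h => hcd h.symm
        · exact hdf
      · rcases hx5bc with rfl | rfl
        · exact fun h => hbd h.symm
        · exact fun h => hcd h.symm
      · rw [hL3]
        rw [Finset.card_insert_of_notMem (by simp [hbc, hbd, hbf, hbs]),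
          Finset.card_insert_of_notMem (by simp [hcd, hcf, hcs]),
          Finset.card_insert_of_notMem (by simp [hdf, hds]),
          Finset.card_insert_of_notMem (by simp [hfs]), Finset.card_singleton]
      · rintro x ⟨hxL, hne⟩
        have e2 := hne 2 (by unfold figAdj figEdges; decide)
        have e4 := hne 4 (by unfold figAdj figEdges; decide)
        have e5 := hne 5 (by unfold figAdj figEdges; decide)
        exact ⟨hxL, fun h => e2 (by rw [hφ2, h]), fun h => e4 (by rw [hφ4, h]),
          fun h => e5 (by rw [hφ5, h])⟩
    · refine ncard_sdiff3 (F := L 1) (p := a) (q := x2) (t := x5) ?_ ?_ ?_ ?_ ?_ h25 ?_ ?_ hn1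
      · rw [hL1]; simp
      · rcases hx2L with rfl | rfl | rfl | rfl | rfl
        · rw [hL1]; simp
        · rw [hL1]; simp
        · exact absurd rfl hx2d
        · rw [hL1]; simp
        · rw [hL1]; simp
      · rcases hx5bc with rfl | rfl <;> (rw [hL1]; simp)
      · rcases hx2L with rfl | rfl | rfl | rfl | rfl
        · exact hab
        · exact hac
        · exact had
        · exact har
        · exact has
      · rcases hx5bc with rfl | rfl
        · exact hab
        · exact hac
      · rw [hL1]
        rw [Finset.card_insert_of_notMem (by simp [hab, hac, har, has]),
          Finset.card_insert_of_notMem (by simp [hbc, hbr, hbs]),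
          Finset.card_insert_of_notMem (by simp [hcr, hcs]),
          Finset.card_insert_of_notMem (by simp [hrs]), Finset.card_singleton]
      · rintro x ⟨hxL, hne⟩
        have e0 := hne 0 (by unfold figAdj figEdges; decide)
        have e2 := hne 2 (by unfold figAdj figEdges; decide)
        have e5 := hne 5 (by unfold figAdj figEdges; decide)
        exact ⟨hxL, fun h => e0 (by rw [hφ0, h]), fun h => e2 (by rw [hφ2, h]),
          fun h => e5 (by rw [hφ5, h])⟩
  | none =>
    by_cases hb : x2 = b ∨ x4 = b <;> by_cases hc : x2 = c ∨ x4 = c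
    · -- both b and c already used on z, p₁: take ψ(q₀) = r, ψ(q₁) = d
      have hkey : (x2 = b ∧ x4 = c) ∨ (x2 = c ∧ x4 = b) := by
        rcases hb with h | h <;> rcases hc with h' | h'
        · exact absurd (h.symm.trans h') hbc
        · exact Or.inl ⟨h, h'⟩
        · exact Or.inr ⟨h', h⟩
        · exact absurd (h.symm.trans h') hbc
      rcases hkey with ⟨h2, h4⟩ | ⟨h2, h4⟩ <;> rw [h2] at hφ2 <;> rw [h4] at hφ4
      · exact caseB a b c L hL5 φ b c r d hφ0 hφ2 hφ4 hφ1 hφ3 hφ5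
          (by rw [hL1]; simp) (by rw [hL3]; simp)
          (fun h => har h.symm) (fun h => hbr h.symm)
          (fun h => hbd h.symm) (fun h => hcd h.symm)
          (Or.inr (Or.inl rfl)) (Or.inr (Or.inr (Or.inr rfl))) hext
      · exact caseB a b c L hL5 φ c b r d hφ0 hφ2 hφ4 hφ1 hφ3 hφ5
          (by rw [hL1]; simp) (by rw [hL3]; simp)
          (fun h => har h.symm) (fun h => hcr h.symm)
          (fun h => hcd h.symm) (fun h => hbd h.symm)
          (Or.inr (Or.inr (Or.inr rfl))) (Or.inr (Or.inl rfl)) hext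
    · -- c unused: take ψ(q₀) = ψ(q₁) = c
      push_neg at hc
      exact caseB a b c L hL5 φ x2 x4 c c hφ0 hφ2 hφ4 hφ1 hφ3 hφ5
        (by rw [hL1]; simp) (by rw [hL3]; simp)
        (fun h => hac h.symm) (fun h => hc.1 h.symm) (fun h => hc.1 h.symm)
        (fun h => hc.2 h.symm)
        (by rcases hb with h | h
            · exact Or.inr (Or.inl h.symm)
            · exact Or.inr (Or.inr (Or.inr h.symm)))
        (Or.inl rfl) hext
    · -- b unused: take ψ(q₀) = ψ(q₁) = b
      push_neg at hb
      exact caseB a b c L hL5 φ x2 x4 b b hφ0 hφ2 hφ4 hφ1 hφ3 hφ5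
        (by rw [hL1]; simp) (by rw [hL3]; simp)
        (fun h => hab h.symm) (fun h => hb.1 h.symm) (fun h => hb.1 h.symm)
        (fun h => hb.2 h.symm)
        (Or.inl rfl)
        (by rcases hc with h | h
            · exact Or.inr (Or.inl h.symm)
            · exact Or.inr (Or.inr (Or.inr h.symm))) hext
    · -- neither used: take ψ(q₀) = b, ψ(q₁) = c
      push_neg at hb; push_neg at hc
      exact caseB a b c L hL5 φ x2 x4 b c hφ0 hφ2 hφ4 hφ1 hφ3 hφ5
        (by rw [hL1]; simp) (by rw [hL3]; simp)
        (fun h => hab h.symm) (fun h => hb.1 h.symm) (fun h => hc.1 h.symm)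
        (fun h => hc.2 h.symm)
        (Or.inl rfl) (Or.inr (Or.inr (Or.inl rfl))) hext
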